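/- Under the independent cascade (live-edge) model, for any seed set S ⊆ V, any set A of already-added edges disjoint from E, and any additional candidate edge e = ⟨u, v⟩ ∉ E ∪ A with u ∈ S and propagation probability p_{u,v} ∈ [0,1], the augmented influence spread satisfies σ(A ∪ {e}, S) = p_{u,v} · σ(A, S ∪ {v}) + (1 − p_{u,v}) · σ(A, S). -/

import Mathlib

open scoped Classical

noncomputable section

/-- The set of nodes reachable from some node of `S` via edges of `g`
(every node reaches itself). -/
def Reach {V : Type*} (S : Finset V) (g : Finset (V × V)) : Set V :=
  {x | ∃ s ∈ S, Relation.ReflTransGen (fun a b => (a, b) ∈ g) s x}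

/-- Probability of the live-edge graph `g ⊆ F`:
`∏_{e ∈ g} p_e · ∏_{e ∈ F ∖ g} (1 - p_e)`. -/
def liveProb {V : Type*} [DecidableEq V] (F : Finset (V × V)) (p : V × V → ℝ)
    (g : Finset (V × V)) : ℝ :=
  (∏ e ∈ g, p e) * ∏ e ∈ F \ g, (1 - p e)

/-- The expected spread of the seed set `S` over live-edge graphs of edge set `F`. -/
def expSpread {V : Type*} [DecidableEq V] (F : Finset (V × V)) (p : V × V → ℝ)
    (S : Finset V) : ℝ :=
  ∑ g ∈ F.powerset, liveProb F p g * ((Reach S g).ncard : ℝ)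

lemma reach_insert_edge {V : Type*} [DecidableEq V] (S : Finset V) (g : Finset (V × V))
    (u v : V) (hu : u ∈ S) :
    Reach S (insert (u, v) g) = Reach (insert v S) g := by
  ext x
  constructor
  · rintro ⟨s, hs, hpath⟩
    induction hpath with
    | refl => exact ⟨s, Finset.mem_insert_of_mem hs, Relation.ReflTransGen.refl⟩
    | tail hab hbc ih =>
      rcases Finset.mem_insert.mp hbc with h | h
      · obtain ⟨rfl, rfl⟩ := Prod.ext_iff.mp h
        exact ⟨_, Finset.mem_insert_self _ _, Relation.ReflTransGen.refl⟩
      · obtain ⟨t, ht, hpath'⟩ := ih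
        exact ⟨t, ht, hpath'.tail h⟩
  · rintro ⟨t, ht, hpath⟩
    have hmono : Relation.ReflTransGen (fun a b => (a, b) ∈ insert (u, v) g) t x :=
      Relation.ReflTransGen.mono (fun a b hab => Finset.mem_insert_of_mem hab) t x hpath
    rcases Finset.mem_insert.mp ht with rfl | ht'
    · exact ⟨u, hu, (Relation.ReflTransGen.single (Finset.mem_insert_self _ _)).trans hmono⟩
    · exact ⟨t, ht', hmono⟩

lemma liveProb_insert_not_mem {V : Type*} [DecidableEq V] (F : Finset (V × V))
    (p : V × V → ℝ) (e : V × V) (g : Finset (V × V)) (heF : e ∉ F) (hg : g ⊆ F) :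
    liveProb (insert e F) p g = (1 - p e) * liveProb F p g := by
  have heg : e ∉ g := fun h => heF (hg h)
  have hrw : insert e F \ g = insert e (F \ g) := Finset.insert_sdiff_of_notMem _ heg
  have heFg : e ∉ F \ g := fun h => heF (Finset.mem_sdiff.mp h).1
  rw [liveProb, liveProb, hrw, Finset.prod_insert heFg]
  ring

lemma liveProb_insert_mem {V : Type*} [DecidableEq V] (F : Finset (V × V))
    (p : V × V → ℝ) (e : V × V) (g : Finset (V × V)) (heF : e ∉ F) (hg : g ⊆ F) :
    liveProb (insert e F) p (insert e g) = p e * liveProb F p g := by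
  have heg : e ∉ g := fun h => heF (hg h)
  have hrw : insert e F \ insert e g = F \ g := by
    ext x
    simp only [Finset.mem_sdiff, Finset.mem_insert, not_or]
    constructor
    · rintro ⟨h1 | h1, h2, h3⟩
      · exact absurd h1 h2
      · exact ⟨h1, h3⟩
    · rintro ⟨h1, h2⟩
      exact ⟨Or.inr h1, fun h => heF (h ▸ h1), h2⟩
  rw [liveProb, liveProb, hrw, Finset.prod_insert heg]
  ring

/-- Lemma 3 (IC model): for a seed set `S`, already-added edges `A` disjoint from `E`, and
a further candidate edge `e = ⟨u,v⟩ ∉ E ∪ A` with `u ∈ S`,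
`σ(A ∪ {e}, S) = p_{u,v} · σ(A, S ∪ {v}) + (1 − p_{u,v}) · σ(A, S)`. -/
theorem augmented_spread_add_edge {V : Type*} [Fintype V] [DecidableEq V]
    (E A : Finset (V × V)) (p : V × V → ℝ)
    (hp : ∀ e, 0 ≤ p e ∧ p e ≤ 1)
    (hEA : Disjoint E A)
    (S : Finset V) (u v : V)
    (hu : u ∈ S) (he : (u, v) ∉ E ∪ A) :
    expSpread (E ∪ (A ∪ {(u, v)})) p S
      = p (u, v) * expSpread (E ∪ A) p (insert v S)
        + (1 - p (u, v)) * expSpread (E ∪ A) p S := by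
  have hrw : E ∪ (A ∪ {(u, v)}) = insert (u, v) (E ∪ A) := by
    ext x; simp only [Finset.mem_union, Finset.mem_insert, Finset.mem_singleton]; tauto
  rw [hrw]
  unfold expSpread
  rw [Finset.sum_powerset_insert he, add_comm, Finset.mul_sum, Finset.mul_sum]
  congr 1
  · refine Finset.sum_congr rfl fun g hg => ?_
    have hgF := Finset.mem_powerset.mp hg
    rw [liveProb_insert_mem _ _ _ _ he hgF, reach_insert_edge S g u v hu]
    ring
  · refine Finset.sum_congr rfl fun g hg => ?_
    have hgF := Finset.mem_powerset.mp hg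
    rw [liveProb_insert_not_mem _ _ _ _ he hgF]
    ring
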